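/- Linear action on the solution simplex: for a positive measure ν on X, fixed t ≥ 0, and the coefficients a_G(t), one has R_H(∑_{G⊆L} a_G(t) R_G(ν)) = ∑_{G⊆L} a_G(t) R_{G∪H}(ν) for every H ⊆ L. (Although R_H is nonlinear, it acts linearly on this particular convex combination.) -/

import Mathlib

open Finset

namespace Recombination

variable {n : ℕ} (X : Fin (n + 1) → Type*) [∀ i, Fintype (X i)] [∀ i, DecidableEq (X i)]

/-- (Signed) measures on the finite product space `X = X₀ × ⋯ × Xₙ`,
identified with their density functions. -/
abbrev Meas := (∀ i, X i) → ℝ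

/-- Total variation norm of a measure. -/
noncomputable def tv (ω : Meas X) : ℝ := ∑ x, |ω x|

/-- Total mass of a measure. -/
noncomputable def mass (ω : Meas X) : ℝ := ∑ x, ω x

/-- Positivity of a measure. -/
def Pos (ω : Meas X) : Prop := ∀ x, 0 ≤ ω x

/-- Marginal (pushforward under the coordinate projection onto the sites
satisfying `p`) of a measure. -/
noncomputable def marg (p : Fin (n + 1) → Prop) [DecidablePred p] (ω : Meas X) :
    (∀ i : {i // p i}, X i.1) → ℝ :=
  fun y => ∑ x : ∀ i, X i, if (∀ i : {i // p i}, x i.1 = y i) then ω x else 0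

/-- Product measure of a measure on the leading block (sites satisfying `p`)
and a measure on the trailing block. -/
noncomputable def prodM (p : Fin (n + 1) → Prop) [DecidablePred p]
    (f : (∀ i : {i // p i}, X i.1) → ℝ) (g : (∀ i : {i // ¬ p i}, X i.1) → ℝ) :
    Meas X :=
  fun x => f (fun i => x i.1) * g (fun i => x i.1)

open Classical in
/-- The elementary recombinator at link `α` (the link between sites `α` and `α+1`):
`R_α(ω) = ((π_{<α}.ω) ⊗ (π_{>α}.ω))/‖ω‖` for `ω ≠ 0`, and `R_α(0) = 0`. -/
noncomputable def R (α : Fin n) (ω : Meas X) : Meas X :=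
  if ω = 0 then 0 else
    (tv X ω)⁻¹ • prodM X (fun i => i.val ≤ α.val)
      (marg X (fun i => i.val ≤ α.val) ω) (marg X (fun i => ¬ i.val ≤ α.val) ω)

/-- The composite recombinator `R_G = ∏_{α ∈ G} R_α`. -/
noncomputable def RG (G : Finset (Fin n)) (ω : Meas X) : Meas X :=
  (G.sort (· ≤ ·)).foldr (fun α ν => R X α ν) ω

/-- The coefficient functions `a_G(t)` of the single-crossover model. -/
noncomputable def coeffA (ρ : Fin n → ℝ) (G : Finset (Fin n)) (t : ℝ) : ℝ :=
  (∏ α ∈ Gᶜ, Real.exp (-(ρ α * t))) * ∏ β ∈ G, (1 - Real.exp (-(ρ β * t)))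

/-- The coefficient functions `b_K(t) = exp(−t ∑_{α∈L∖K} ρ_α)`. -/
noncomputable def coeffB (ρ : Fin n → ℝ) (K : Finset (Fin n)) (t : ℝ) : ℝ :=
  Real.exp (-(∑ α ∈ Kᶜ, ρ α) * t)

/-- The linkage-disequilibrium operators `T_G = ∑_{H ⊇ G} (−1)^{|H∖G|} R_H`. -/
noncomputable def T (G : Finset (Fin n)) (ω : Meas X) : Meas X :=
  ∑ H ∈ (Finset.univ : Finset (Fin n)).powerset.filter (fun H => G ⊆ H),
    ((-1 : ℝ) ^ (H \ G).card) • RG X H ω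

/-- The solution `ω_t = ∑_{G⊆L} a_G(t) R_G(ω₀)` of the recombination equation. -/
noncomputable def sol (ρ : Fin n → ℝ) (ω₀ : Meas X) (t : ℝ) : Meas X :=
  ∑ G ∈ (Finset.univ : Finset (Fin n)).powerset, coeffA ρ G t • RG X G ω₀

/-- The one-site marginal at site `i`. -/
noncomputable def marg1 (i : Fin (n + 1)) (ω : Meas X) (y : X i) : ℝ :=
  ∑ x : ∀ j, X j, if x i = y then ω x else 0

/-! ### Auxiliary development -/

set_option linter.unusedSectionVars false

section Basics

lemma mass_zero : mass X (0 : Meas X) = 0 := by simp [mass]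

lemma mass_nonneg {ω : Meas X} (hω : Pos X ω) : 0 ≤ mass X ω :=
  Finset.sum_nonneg fun x _ => hω x

lemma tv_eq_mass {ω : Meas X} (hω : Pos X ω) : tv X ω = mass X ω := by
  unfold tv mass
  exact Finset.sum_congr rfl fun x _ => abs_of_nonneg (hω x)

lemma mass_pos {ω : Meas X} (hω : Pos X ω) (h0 : ω ≠ 0) : 0 < mass X ω := by
  obtain ⟨x, hx⟩ := Function.ne_iff.mp h0
  have hx' : 0 < ω x := lt_of_le_of_ne (hω x) (by simpa using (Ne.symm hx))
  exact Finset.sum_pos' (fun y _ => hω y) ⟨x, Finset.mem_univ x, hx'⟩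

lemma ne_zero_of_mass {ω : Meas X} (h : mass X ω ≠ 0) : ω ≠ 0 := by
  intro h0; rw [h0] at h; exact h (mass_zero X)

end Basics

section Split

variable (p : Fin (n + 1) → Prop) [DecidablePred p]

/-- Restriction of a configuration to the sites satisfying `p`. -/
def restr (x : ∀ i, X i) : ∀ i : {i // p i}, X i.1 := fun i => x i.1

/-- Glue two partial configurations into a full configuration. -/
def glue (u : ∀ i : {i // p i}, X i.1) (v : ∀ i : {i // ¬ p i}, X i.1) :
    ∀ i, X i := fun i => if h : p i then u ⟨i, h⟩ else v ⟨i, h⟩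

@[simp] lemma restr_glue (u : ∀ i : {i // p i}, X i.1) (v) :
    restr X p (glue X p u v) = u := by
  funext i; simp [restr, glue, i.2]

@[simp] lemma restrN_glue (u) (v : ∀ i : {i // ¬ p i}, X i.1) :
    restr X (fun i => ¬ p i) (glue X p u v) = v := by
  funext i
  have : ¬ p i.1 := i.2
  simp [restr, glue, this]

@[simp] lemma glue_restr (x : ∀ i, X i) :
    glue X p (restr X p x) (restr X (fun i => ¬ p i) x) = x := by
  funext i; by_cases h : p i <;> simp [glue, restr, h]

/-- Splitting equivalence. -/
def splitEquiv : (∀ i, X i) ≃ (∀ i : {i // p i}, X i.1) × (∀ i : {i // ¬ p i}, X i.1) where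
  toFun x := (restr X p x, restr X (fun i => ¬ p i) x)
  invFun uv := glue X p uv.1 uv.2
  left_inv x := glue_restr X p x
  right_inv uv := by
    cases uv with
    | mk u v => simp

lemma sum_split (F : (∀ i, X i) → ℝ) :
    ∑ x, F x = ∑ u : ∀ i : {i // p i}, X i.1, ∑ v : ∀ i : {i // ¬ p i}, X i.1,
      F (glue X p u v) := by
  have h := Equiv.sum_comp (splitEquiv X p).symm F
  rw [← h, Fintype.sum_prod_type]
  rfl

lemma marg_apply (ω : Meas X) (y : ∀ i : {i // p i}, X i.1) :
    marg X p ω y = ∑ v : ∀ i : {i // ¬ p i}, X i.1, ω (glue X p y v) := by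
  unfold marg
  rw [sum_split X p]
  have hcond : ∀ (u : ∀ i : {i // p i}, X i.1) v,
      (∀ i : {i // p i}, glue X p u v i.1 = y i) ↔ u = y := by
    intro u v
    rw [funext_iff]
    constructor
    · intro h i; have := h i; simpa [glue, i.2] using this
    · intro h i; have := h i; simpa [glue, i.2] using this
  have : ∀ u : ∀ i : {i // p i}, X i.1,
      (∑ v : ∀ i : {i // ¬ p i}, X i.1,
        if (∀ i : {i // p i}, glue X p u v i.1 = y i) then ω (glue X p u v) else 0)
      = if u = y then ∑ v : ∀ i : {i // ¬ p i}, X i.1, ω (glue X p u v) else 0 := by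
    intro u
    by_cases h : u = y
    · simp only [if_pos h]
      exact Finset.sum_congr rfl fun v _ => by rw [if_pos ((hcond u v).mpr h)]
    · simp only [if_neg h]
      refine Finset.sum_eq_zero fun v _ => by rw [if_neg (fun hc => h ((hcond u v).mp hc))]
  simp only [this]
  rw [Finset.sum_ite_eq' Finset.univ y]
  simp

lemma margN_apply (ω : Meas X) (v : ∀ i : {i // ¬ p i}, X i.1) :
    marg X (fun i => ¬ p i) ω v = ∑ u : ∀ i : {i // p i}, X i.1, ω (glue X p u v) := by
  unfold marg
  rw [sum_split X p, Finset.sum_comm]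
  have hcond : ∀ u (v' : ∀ i : {i // ¬ p i}, X i.1),
      (∀ i : {i // ¬ p i}, glue X p u v' i.1 = v i) ↔ v' = v := by
    intro u v'
    rw [funext_iff]
    constructor
    · intro h i; have := h i
      have hni : ¬ p i.1 := i.2
      simpa [glue, hni] using this
    · intro h i; have := h i
      have hni : ¬ p i.1 := i.2
      simpa [glue, hni] using this
  have : ∀ v' : ∀ i : {i // ¬ p i}, X i.1,
      (∑ u : ∀ i : {i // p i}, X i.1,
        if (∀ i : {i // ¬ p i}, glue X p u v' i.1 = v i) then ω (glue X p u v') else 0)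
      = if v' = v then ∑ u : ∀ i : {i // p i}, X i.1, ω (glue X p u v') else 0 := by
    intro v'
    by_cases h : v' = v
    · simp only [if_pos h]
      exact Finset.sum_congr rfl fun u _ => by rw [if_pos ((hcond u v').mpr h)]
    · simp only [if_neg h]
      refine Finset.sum_eq_zero fun u _ => by rw [if_neg (fun hc => h ((hcond u v').mp hc))]
  simp only [this]
  rw [Finset.sum_ite_eq' Finset.univ v]
  simp

lemma prodM_apply' (f) (g) (x : ∀ i, X i) :
    prodM X p f g x = f (restr X p x) * g (restr X (fun i => ¬ p i) x) := rfl

lemma mass_marg (ω : Meas X) :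
    ∑ u : ∀ i : {i // p i}, X i.1, marg X p ω u = mass X ω := by
  simp only [marg_apply]
  rw [mass, sum_split X p]

lemma mass_margN (ω : Meas X) :
    ∑ v : ∀ i : {i // ¬ p i}, X i.1, marg X (fun i => ¬ p i) ω v = mass X ω := by
  simp only [margN_apply]
  rw [mass, sum_split X p, Finset.sum_comm]

lemma marg_nonneg {ω : Meas X} (hω : Pos X ω) (y) : 0 ≤ marg X p ω y := by
  unfold marg
  refine Finset.sum_nonneg fun x _ => ?_
  split
  · exact hω x
  · exact le_refl 0

end Split

section Triple

variable (q p : Fin (n + 1) → Prop) [DecidablePred q] [DecidablePred p]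

/-- Glue three partial configurations (bottom `q`, middle `p ∧ ¬q`, top `¬p`). -/
def tglue (u : ∀ i : {i // q i}, X i.1)
    (v : ∀ i : {i : Fin (n + 1) // p i ∧ ¬ q i}, X i.1)
    (w : ∀ i : {i // ¬ p i}, X i.1) : ∀ i, X i :=
  fun i => if h : q i then u ⟨i, h⟩ else if h' : p i then v ⟨i, h', h⟩ else w ⟨i, h'⟩

variable (hqp : ∀ i, q i → p i)

include hqp

/-- Sew a bottom and a middle configuration into a `p`-configuration. -/
def sew12 (u : ∀ i : {i // q i}, X i.1)
    (v : ∀ i : {i : Fin (n + 1) // p i ∧ ¬ q i}, X i.1) : ∀ i : {i // p i}, X i.1 :=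
  fun j => if h : q j.1 then u ⟨j.1, h⟩ else v ⟨j.1, j.2, h⟩

/-- Sew a middle and a top configuration into a `¬q`-configuration. -/
def sew23 (v : ∀ i : {i : Fin (n + 1) // p i ∧ ¬ q i}, X i.1)
    (w : ∀ i : {i // ¬ p i}, X i.1) : ∀ i : {i // ¬ q i}, X i.1 :=
  fun j => if h : p j.1 then v ⟨j.1, h, j.2⟩ else w ⟨j.1, h⟩

lemma glue_sew12 (u v w) : glue X p (sew12 X q p u v) w = tglue X q p u v w := by
  funext i
  by_cases hq : q i
  · simp [glue, tglue, sew12, hq, hqp i hq]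
  · by_cases hp : p i <;> simp [glue, tglue, sew12, hq, hp]

lemma glue_sew23 (u v w) : glue X q u (sew23 X q p v w) = tglue X q p u v w := by
  funext i
  by_cases hq : q i
  · simp [glue, tglue, hq]
  · by_cases hp : p i <;> simp [glue, tglue, sew23, hq, hp]

@[simp] lemma restr_q_tglue (u v w) : restr X q (tglue X q p u v w) = u := by
  funext j; simp [restr, tglue, j.2]

@[simp] lemma restrMid_tglue (u v w) :
    restr X (fun i => p i ∧ ¬ q i) (tglue X q p u v w) = v := by
  funext j
  have h1 : p j.1 := j.2.1
  have h2 : ¬ q j.1 := j.2.2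
  simp [restr, tglue, h1, h2]

@[simp] lemma restrNp_tglue (u v w) : restr X (fun i => ¬ p i) (tglue X q p u v w) = w := by
  funext j
  have h1 : ¬ p j.1 := j.2
  have h2 : ¬ q j.1 := fun hq => h1 (hqp _ hq)
  simp [restr, tglue, h1, h2]

lemma restr_p_tglue (u v w) :
    restr X p (tglue X q p u v w) = sew12 X q p u v := by
  funext j
  have hp : p j.1 := j.2
  by_cases hq : q j.1 <;> simp [restr, tglue, sew12, hp, hq]

lemma restrNq_tglue (u v w) :
    restr X (fun i => ¬ q i) (tglue X q p u v w) = sew23 X q p v w := by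
  funext j
  have hq : ¬ q j.1 := j.2
  by_cases hp : p j.1 <;> simp [restr, tglue, sew23, hp, hq]

/-- `p`-configurations split into bottom and middle. -/
def sewEquiv12 :
    ((∀ i : {i // q i}, X i.1) × (∀ i : {i : Fin (n + 1) // p i ∧ ¬ q i}, X i.1)) ≃
      (∀ i : {i // p i}, X i.1) where
  toFun uv := sew12 X q p uv.1 uv.2
  invFun y := (fun j => y ⟨j.1, hqp _ j.2⟩, fun j => y ⟨j.1, j.2.1⟩)
  left_inv uv := by
    cases uv with
    | mk u v =>
      refine Prod.ext ?_ ?_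
      · funext j; simp [sew12, j.2]
      · funext j
        have : ¬ q j.1 := j.2.2
        simp [sew12, this]
  right_inv y := by
    funext j
    by_cases hq : q j.1 <;> simp [sew12, hq]

/-- `¬q`-configurations split into middle and top. -/
def sewEquiv23 :
    ((∀ i : {i : Fin (n + 1) // p i ∧ ¬ q i}, X i.1) × (∀ i : {i // ¬ p i}, X i.1)) ≃
      (∀ i : {i // ¬ q i}, X i.1) where
  toFun vw := sew23 X q p vw.1 vw.2
  invFun z := (fun j => z ⟨j.1, j.2.2⟩, fun j => z ⟨j.1, fun hq => j.2 (hqp _ hq)⟩)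
  left_inv vw := by
    cases vw with
    | mk v w =>
      refine Prod.ext ?_ ?_
      · funext j; simp [sew23, j.2.1]
      · funext j
        have : ¬ p j.1 := j.2
        simp [sew23, this]
  right_inv z := by
    funext j
    by_cases hp : p j.1 <;> simp [sew23, hp]

lemma sum_sew12 (F : (∀ i : {i // p i}, X i.1) → ℝ) :
    ∑ y, F y = ∑ u, ∑ v, F (sew12 X q p u v) := by
  have h := Equiv.sum_comp (sewEquiv12 X q p hqp) F
  rw [← h, Fintype.sum_prod_type]
  rfl

lemma sum_sew23 (F : (∀ i : {i // ¬ q i}, X i.1) → ℝ) :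
    ∑ z, F z = ∑ v, ∑ w, F (sew23 X q p v w) := by
  have h := Equiv.sum_comp (sewEquiv23 X q p hqp) F
  rw [← h, Fintype.sum_prod_type]
  rfl

lemma marg_p_sew (ω : Meas X) (u v) :
    marg X p ω (sew12 X q p u v) = ∑ w, ω (tglue X q p u v w) := by
  rw [marg_apply]
  exact Finset.sum_congr rfl fun w _ => by rw [glue_sew12 X q p hqp]

lemma marg_nq_sew (ω : Meas X) (v w) :
    marg X (fun i => ¬ q i) ω (sew23 X q p v w) = ∑ u, ω (tglue X q p u v w) := by
  rw [margN_apply]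
  exact Finset.sum_congr rfl fun u _ => by rw [glue_sew23 X q p hqp]

lemma marg_q_tsum (ω : Meas X) (u) :
    marg X q ω u = ∑ v, ∑ w, ω (tglue X q p u v w) := by
  rw [marg_apply, sum_sew23 X q p hqp]
  exact Finset.sum_congr rfl fun v _ => Finset.sum_congr rfl fun w _ => by
    rw [glue_sew23 X q p hqp]

lemma marg_np_tsum (ω : Meas X) (w) :
    marg X (fun i => ¬ p i) ω w = ∑ u, ∑ v, ω (tglue X q p u v w) := by
  rw [margN_apply, sum_sew12 X q p hqp]
  exact Finset.sum_congr rfl fun u _ => Finset.sum_congr rfl fun v _ => by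
    rw [glue_sew12 X q p hqp]

lemma marg_mid_tsum (ω : Meas X) (v) :
    marg X (fun i => p i ∧ ¬ q i) ω v = ∑ u, ∑ w, ω (tglue X q p u v w) := by
  unfold marg
  have hsum : ∑ x, (if (∀ i : {i : Fin (n+1) // p i ∧ ¬ q i}, x i.1 = v i) then ω x else 0)
      = ∑ u, ∑ v', ∑ w,
        (if (∀ i : {i : Fin (n+1) // p i ∧ ¬ q i}, tglue X q p u v' w i.1 = v i)
          then ω (tglue X q p u v' w) else 0) := by
    rw [sum_split X q]
    refine Finset.sum_congr rfl fun u _ => ?_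
    rw [sum_sew23 X q p hqp]
    refine Finset.sum_congr rfl fun v' _ => Finset.sum_congr rfl fun w _ => by
      rw [glue_sew23 X q p hqp]
  rw [hsum]
  have hcond : ∀ u v' w,
      (∀ i : {i : Fin (n+1) // p i ∧ ¬ q i}, tglue X q p u v' w i.1 = v i) ↔ v' = v := by
    intro u v' w
    rw [funext_iff]
    have hval : ∀ i : {i : Fin (n+1) // p i ∧ ¬ q i}, tglue X q p u v' w i.1 = v' i := by
      intro i
      have h1 : p i.1 := i.2.1
      have h2 : ¬ q i.1 := i.2.2
      simp [tglue, h1, h2]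
    constructor
    · intro h i
      rw [← hval i]; exact h i
    · intro h i
      rw [hval i, h i]
  refine Finset.sum_congr rfl fun u _ => ?_
  have : ∀ v' : ∀ i : {i : Fin (n+1) // p i ∧ ¬ q i}, X i.1,
      (∑ w, if (∀ i : {i : Fin (n+1) // p i ∧ ¬ q i}, tglue X q p u v' w i.1 = v i)
          then ω (tglue X q p u v' w) else 0)
      = if v' = v then ∑ w, ω (tglue X q p u v' w) else 0 := by
    intro v'
    by_cases h : v' = v
    · simp only [if_pos h]
      exact Finset.sum_congr rfl fun w _ => by rw [if_pos ((hcond u v' w).mpr h)]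
    · simp only [if_neg h]
      exact Finset.sum_eq_zero fun w _ => by rw [if_neg (fun hc => h ((hcond u v' w).mp hc))]
  simp only [this]
  rw [Finset.sum_ite_eq' Finset.univ v]
  simp

lemma restr_p_eq_sew (x : ∀ i, X i) :
    restr X p x = sew12 X q p (restr X q x) (restr X (fun i => p i ∧ ¬ q i) x) := by
  funext j
  by_cases hq : q j.1 <;> simp [restr, sew12, hq]

lemma restrNq_eq_sew (x : ∀ i, X i) :
    restr X (fun i => ¬ q i) x
      = sew23 X q p (restr X (fun i => p i ∧ ¬ q i) x) (restr X (fun i => ¬ p i) x) := by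
  funext j
  by_cases hp : p j.1 <;> simp [restr, sew23, hp]

end Triple

section Rbasics

variable (p : Fin (n + 1) → Prop) [DecidablePred p]

lemma marg_smul (c : ℝ) (ω : Meas X) :
    marg X p (c • ω) = c • marg X p ω := by
  funext y
  simp only [marg, Pi.smul_apply, smul_eq_mul, Finset.mul_sum]
  exact Finset.sum_congr rfl fun x _ => by split <;> simp

lemma marg_linear {κ : Type*} (s : Finset κ) (c : κ → ℝ) (f : κ → Meas X) :
    marg X p (∑ G ∈ s, c G • f G) = ∑ G ∈ s, c G • marg X p (f G) := by
  funext y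
  simp only [marg_apply, Finset.sum_apply, Pi.smul_apply, smul_eq_mul, Finset.mul_sum]
  rw [Finset.sum_comm]

lemma mass_linear {κ : Type*} (s : Finset κ) (c : κ → ℝ) (f : κ → Meas X) :
    mass X (∑ G ∈ s, c G • f G) = ∑ G ∈ s, c G * mass X (f G) := by
  simp only [mass, Finset.sum_apply, Pi.smul_apply, smul_eq_mul, Finset.mul_sum]
  rw [Finset.sum_comm]

lemma Pos_linear {κ : Type*} {s : Finset κ} {c : κ → ℝ} {f : κ → Meas X}
    (hc : ∀ G ∈ s, 0 ≤ c G) (hf : ∀ G ∈ s, Pos X (f G)) :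
    Pos X (∑ G ∈ s, c G • f G) := by
  intro x
  rw [Finset.sum_apply]
  exact Finset.sum_nonneg fun G hG => mul_nonneg (hc G hG) (hf G hG x)

lemma mass_prodM (f) (g) :
    mass X (prodM X p f g)
      = (∑ u : ∀ i : {i // p i}, X i.1, f u) * ∑ v : ∀ i : {i // ¬ p i}, X i.1, g v := by
  rw [mass, sum_split X p, Finset.sum_mul_sum]
  exact Finset.sum_congr rfl fun u _ => Finset.sum_congr rfl fun v _ => by
    rw [prodM_apply', restr_glue, restrN_glue]

lemma R_zero (α : Fin n) : R X α (0 : Meas X) = 0 := by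
  rw [R, if_pos rfl]

lemma R_apply {ω : Meas X} (hω0 : ω ≠ 0) (α : Fin n) :
    R X α ω = (tv X ω)⁻¹ • prodM X (fun i => i.val ≤ α.val)
      (marg X (fun i => i.val ≤ α.val) ω) (marg X (fun i => ¬ i.val ≤ α.val) ω) := by
  rw [R, if_neg hω0]

lemma R_pos {ω : Meas X} (hω : Pos X ω) (α : Fin n) : Pos X (R X α ω) := by
  by_cases h0 : ω = 0
  · rw [h0, R_zero]; intro x; exact le_refl 0
  · rw [R_apply X h0]
    intro x
    rw [Pi.smul_apply, smul_eq_mul, prodM_apply']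
    have htv : 0 ≤ tv X ω := Finset.sum_nonneg fun y _ => abs_nonneg _
    exact mul_nonneg (inv_nonneg.mpr htv)
      (mul_nonneg (marg_nonneg X _ hω _) (marg_nonneg X _ hω _))

lemma mass_R {ω : Meas X} (hω : Pos X ω) (α : Fin n) : mass X (R X α ω) = mass X ω := by
  by_cases h0 : ω = 0
  · rw [h0, R_zero]
  · have hm : mass X ω ≠ 0 := ne_of_gt (mass_pos X hω h0)
    rw [R_apply X h0]
    have : mass X ((tv X ω)⁻¹ • prodM X (fun i => i.val ≤ α.val)
        (marg X (fun i => i.val ≤ α.val) ω) (marg X (fun i => ¬ i.val ≤ α.val) ω))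
        = (tv X ω)⁻¹ * mass X (prodM X (fun i => i.val ≤ α.val)
        (marg X (fun i => i.val ≤ α.val) ω) (marg X (fun i => ¬ i.val ≤ α.val) ω)) := by
      simp only [mass, Pi.smul_apply, smul_eq_mul, Finset.mul_sum]
    rw [this, mass_prodM, mass_marg, mass_margN, tv_eq_mass X hω]
    field_simp

lemma R_ne_zero {ω : Meas X} (hω : Pos X ω) (h0 : ω ≠ 0) (α : Fin n) :
    R X α ω ≠ 0 := by
  apply ne_zero_of_mass
  rw [mass_R X hω]
  exact ne_of_gt (mass_pos X hω h0)

end Rbasics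

section MargMove

lemma margA {ω : Meas X} (hω : Pos X ω) {α β : Fin n} (h : α.val ≤ β.val) :
    marg X (fun i => i.val ≤ α.val) (R X β ω)
      = marg X (fun i => i.val ≤ α.val) ω := by
  by_cases h0 : ω = 0
  · rw [h0, R_zero]
  · have hm : mass X ω ≠ 0 := ne_of_gt (mass_pos X hω h0)
    set q : Fin (n + 1) → Prop := fun i => i.val ≤ α.val with hq
    set p : Fin (n + 1) → Prop := fun i => i.val ≤ β.val with hp
    have hqp : ∀ i, q i → p i := fun i hi => le_trans hi h
    rw [R_apply X h0, marg_smul]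
    funext u
    rw [Pi.smul_apply, smul_eq_mul]
    rw [marg_q_tsum X q p hqp]
    have hpt : ∀ u' v w, prodM X p (marg X p ω) (marg X (fun i => ¬ p i) ω)
        (tglue X q p u' v w)
        = marg X p ω (sew12 X q p u' v) * marg X (fun i => ¬ p i) ω w := by
      intro u' v w
      rw [prodM_apply', restr_p_tglue X q p hqp, restrNp_tglue X q p hqp]
    simp +zetaDelta only [hpt]
    rw [← Finset.sum_mul_sum]
    have h1 : (∑ v, marg X p ω (sew12 X q p u v)) = marg X q ω u := by
      rw [marg_q_tsum X q p hqp ω u]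
      exact Finset.sum_congr rfl fun v _ => (marg_p_sew X q p hqp ω u v)
    rw [h1, mass_margN, tv_eq_mass X hω]
    field_simp
    rfl

lemma margA' {ω : Meas X} (hω : Pos X ω) {α β : Fin n} (h : β.val ≤ α.val) :
    marg X (fun i => ¬ i.val ≤ α.val) (R X β ω)
      = marg X (fun i => ¬ i.val ≤ α.val) ω := by
  by_cases h0 : ω = 0
  · rw [h0, R_zero]
  · have hm : mass X ω ≠ 0 := ne_of_gt (mass_pos X hω h0)
    set q : Fin (n + 1) → Prop := fun i => i.val ≤ β.val with hq
    set p : Fin (n + 1) → Prop := fun i => i.val ≤ α.val with hp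
    have hqp : ∀ i, q i → p i := fun i hi => le_trans hi h
    rw [R_apply X h0, marg_smul]
    funext w
    rw [Pi.smul_apply, smul_eq_mul]
    rw [marg_np_tsum X q p hqp]
    have hpt : ∀ u v (w' : ∀ i : {i // ¬ p i}, X i.1),
        prodM X q (marg X q ω) (marg X (fun i => ¬ q i) ω) (tglue X q p u v w')
        = marg X q ω u * marg X (fun i => ¬ q i) ω (sew23 X q p v w') := by
      intro u v w'
      rw [prodM_apply', restr_q_tglue X q p hqp, restrNq_tglue X q p hqp]
    simp +zetaDelta only [hpt]
    rw [← Finset.sum_mul_sum]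
    have h1 : (∑ v, marg X (fun i => ¬ q i) ω (sew23 X q p v w))
        = marg X (fun i => ¬ p i) ω w := by
      rw [marg_np_tsum X q p hqp ω w, Finset.sum_comm]
      exact Finset.sum_congr rfl fun v _ => (marg_nq_sew X q p hqp ω v w)
    rw [h1, mass_marg, tv_eq_mass X hω]
    field_simp
    rfl

end MargMove

section CommIdem

lemma R_apply_pt {ω : Meas X} (hω : Pos X ω) (h0 : ω ≠ 0) (α : Fin n) (x : ∀ i, X i) :
    R X α ω x = (mass X ω)⁻¹
      * (marg X (fun i => i.val ≤ α.val) ω (restr X (fun i => i.val ≤ α.val) x)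
        * marg X (fun i => ¬ i.val ≤ α.val) ω (restr X (fun i => ¬ i.val ≤ α.val) x)) := by
  rw [R_apply X h0, tv_eq_mass X hω, Pi.smul_apply, smul_eq_mul, prodM_apply']

lemma R_idem {ω : Meas X} (hω : Pos X ω) (α : Fin n) :
    R X α (R X α ω) = R X α ω := by
  by_cases h0 : ω = 0
  · rw [h0, R_zero, R_zero]
  · have hξpos : Pos X (R X α ω) := R_pos X hω α
    have hξ0 : R X α ω ≠ 0 := R_ne_zero X hω h0 α
    have e1 := margA X hω (le_refl α.val) (β := α)
    have e2 := margA' X hω (le_refl α.val) (β := α)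
    conv_lhs => rw [R_apply X hξ0 α]
    rw [e1, e2, tv_eq_mass X hξpos, mass_R X hω, ← tv_eq_mass X hω, ← R_apply X h0 α]

lemma R_comm_le {ω : Meas X} (hω : Pos X ω) {α β : Fin n} (h : α.val ≤ β.val) :
    R X α (R X β ω) = R X β (R X α ω) := by
  by_cases h0 : ω = 0
  · simp only [h0, R_zero]
  · have hm : mass X ω ≠ 0 := ne_of_gt (mass_pos X hω h0)
    set q : Fin (n + 1) → Prop := fun i => i.val ≤ α.val with hqdef
    set p : Fin (n + 1) → Prop := fun i => i.val ≤ β.val with hpdef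
    have hqp : ∀ i, q i → p i := fun i hi => le_trans hi h
    set f₁ := marg X q ω with hf₁
    set f₂ := marg X (fun i => p i ∧ ¬ q i) ω with hf₂
    set f₃ := marg X (fun i => ¬ p i) ω with hf₃
    have hξpos : Pos X (R X β ω) := R_pos X hω β
    have hξ0 : R X β ω ≠ 0 := R_ne_zero X hω h0 β
    have hζpos : Pos X (R X α ω) := R_pos X hω α
    have hζ0 : R X α ω ≠ 0 := R_ne_zero X hω h0 α
    have hmξ : mass X (R X β ω) = mass X ω := mass_R X hω β
    have hmζ : mass X (R X α ω) = mass X ω := mass_R X hω α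
    -- pointwise values of the inner recombinators
    have hξpt : ∀ y, R X β ω y = (mass X ω)⁻¹
        * (marg X p ω (restr X p y) * f₃ (restr X (fun i => ¬ p i) y)) :=
      fun y => R_apply_pt X hω h0 β y
    have hζpt : ∀ y, R X α ω y = (mass X ω)⁻¹
        * (f₁ (restr X q y) * marg X (fun i => ¬ q i) ω (restr X (fun i => ¬ q i) y)) :=
      fun y => R_apply_pt X hω h0 α y
    -- marginal of R β ω on ¬q
    have Hq : ∀ v w, marg X (fun i => ¬ q i) (R X β ω) (sew23 X q p v w)
        = (mass X ω)⁻¹ * (f₂ v * f₃ w) := by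
      intro v w
      rw [marg_nq_sew X q p hqp]
      have : ∀ u, R X β ω (tglue X q p u v w)
          = (mass X ω)⁻¹ * (marg X p ω (sew12 X q p u v) * f₃ w) := by
        intro u
        rw [hξpt, restr_p_tglue X q p hqp, restrNp_tglue X q p hqp]
      simp only [this]
      have hA : (∑ u, marg X p ω (sew12 X q p u v)) = f₂ v := by
        rw [hf₂, marg_mid_tsum X q p hqp ω v]
        exact Finset.sum_congr rfl fun u _ => (marg_p_sew X q p hqp ω u v)
      rw [← hA, Finset.sum_mul, Finset.mul_sum]
    -- marginal of R α ω on p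
    have Hp : ∀ u v, marg X p (R X α ω) (sew12 X q p u v)
        = (mass X ω)⁻¹ * (f₁ u * f₂ v) := by
      intro u v
      rw [marg_p_sew X q p hqp]
      have : ∀ w, R X α ω (tglue X q p u v w)
          = (mass X ω)⁻¹ * (f₁ u * marg X (fun i => ¬ q i) ω (sew23 X q p v w)) := by
        intro w
        rw [hζpt, restr_q_tglue X q p hqp, restrNq_tglue X q p hqp]
      simp only [this]
      have h2 : (∑ w, marg X (fun i => ¬ q i) ω (sew23 X q p v w)) = f₂ v := by
        rw [hf₂, marg_mid_tsum X q p hqp ω v, Finset.sum_comm]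
        exact Finset.sum_congr rfl fun w _ => (marg_nq_sew X q p hqp ω v w)
      rw [← h2, Finset.mul_sum, Finset.mul_sum]
    funext x
    rw [R_apply_pt X hξpos hξ0 α x, R_apply_pt X hζpos hζ0 β x, hmξ, hmζ]
    rw [margA X hω h, margA' X hω h]
    rw [restrNq_eq_sew X q p hqp x, Hq]
    rw [restr_p_eq_sew X q p hqp x, Hp]
    ring

lemma R_comm {ω : Meas X} (hω : Pos X ω) (α β : Fin n) :
    R X α (R X β ω) = R X β (R X α ω) := by
  rcases le_total α.val β.val with h | h
  · exact R_comm_le X hω h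
  · exact (R_comm_le X hω h).symm

end CommIdem

section Fold

lemma foldR_pos {ω : Meas X} (hω : Pos X ω) (l : List (Fin n)) :
    Pos X (l.foldr (fun α ν => R X α ν) ω) := by
  induction l with
  | nil => exact hω
  | cons a l ih => exact R_pos X ih a

lemma foldR_mass {ω : Meas X} (hω : Pos X ω) (l : List (Fin n)) :
    mass X (l.foldr (fun α ν => R X α ν) ω) = mass X ω := by
  induction l with
  | nil => rfl
  | cons a l ih => rw [List.foldr_cons, mass_R X (foldR_pos X hω l) a, ih]

set_option maxHeartbeats 1000000 in
lemma foldR_perm {l₁ l₂ : List (Fin n)} (hp : l₁.Perm l₂) {ω : Meas X} (hω : Pos X ω) :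
    l₁.foldr (fun α ν => R X α ν) ω = l₂.foldr (fun α ν => R X α ν) ω := by
  induction hp with
  | nil => rfl
  | cons a h ih => exact congrArg (fun ν => R X a ν) ih
  | swap a b l => exact R_comm X (foldR_pos X hω l) _ _
  | trans h₁ h₂ ih₁ ih₂ => rw [ih₁, ih₂]

lemma RG_pos {ω : Meas X} (hω : Pos X ω) (S : Finset (Fin n)) : Pos X (RG X S ω) :=
  foldR_pos X hω _

lemma mass_RG {ω : Meas X} (hω : Pos X ω) (S : Finset (Fin n)) :
    mass X (RG X S ω) = mass X ω := foldR_mass X hω _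

lemma RG_ne_zero {ω : Meas X} (hω : Pos X ω) (h0 : ω ≠ 0) (S : Finset (Fin n)) :
    RG X S ω ≠ 0 := by
  apply ne_zero_of_mass
  rw [mass_RG X hω]
  exact ne_of_gt (mass_pos X hω h0)

lemma RG_zero (S : Finset (Fin n)) : RG X S (0 : Meas X) = 0 := by
  unfold RG
  induction (S.sort (· ≤ ·)) with
  | nil => rfl
  | cons a l ih => rw [List.foldr_cons, ih, R_zero]

lemma R_RG {ω : Meas X} (hω : Pos X ω) (α : Fin n) (S : Finset (Fin n)) :
    R X α (RG X S ω) = RG X (insert α S) ω := by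
  by_cases hα : α ∈ S
  · rw [Finset.insert_eq_self.mpr hα]
    have hperm : (S.sort (· ≤ ·)).Perm (α :: (S.erase α).sort (· ≤ ·)) := by
      rw [← Multiset.coe_eq_coe, ← Multiset.cons_coe, Finset.sort_eq, Finset.sort_eq,
        Finset.erase_val]
      exact (Multiset.cons_erase (Finset.mem_def.mp hα)).symm
    unfold RG
    rw [foldR_perm X hperm hω, List.foldr_cons]
    exact R_idem X (foldR_pos X hω _) α
  · have hperm : ((insert α S).sort (· ≤ ·)).Perm (α :: S.sort (· ≤ ·)) := by
      rw [← Multiset.coe_eq_coe, ← Multiset.cons_coe, Finset.sort_eq, Finset.sort_eq,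
        Finset.insert_val_of_notMem hα]
    unfold RG
    rw [foldR_perm X hperm hω, List.foldr_cons]

end Fold

section Dep

lemma marg_strip {μ : Meas X} (hμ : Pos X μ) (α : Fin n) (l : List (Fin n))
    (hl : ∀ β ∈ l, α.val ≤ β.val) :
    marg X (fun i => i.val ≤ α.val) (l.foldr (fun β ν => R X β ν) μ)
      = marg X (fun i => i.val ≤ α.val) μ := by
  induction l with
  | nil => rfl
  | cons a l ih =>
      rw [List.foldr_cons, margA X (foldR_pos X hμ l) (hl a (List.mem_cons_self (a := a) (l := l))),
        ih (fun β hβ => hl β (List.mem_cons_of_mem a hβ))]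

lemma marg_stripN {μ : Meas X} (hμ : Pos X μ) (α : Fin n) (l : List (Fin n))
    (hl : ∀ β ∈ l, β.val ≤ α.val) :
    marg X (fun i => ¬ i.val ≤ α.val) (l.foldr (fun β ν => R X β ν) μ)
      = marg X (fun i => ¬ i.val ≤ α.val) μ := by
  induction l with
  | nil => rfl
  | cons a l ih =>
      rw [List.foldr_cons, margA' X (foldR_pos X hμ l) (hl a (List.mem_cons_self (a := a) (l := l))),
        ih (fun β hβ => hl β (List.mem_cons_of_mem a hβ))]

lemma sort_filter_perm (S : Finset (Fin n)) (P : Fin n → Prop) [DecidablePred P] :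
    (S.sort (· ≤ ·)).Perm
      ((S.filter (fun β => ¬ P β)).sort (· ≤ ·) ++ (S.filter P).sort (· ≤ ·)) := by
  rw [← Multiset.coe_eq_coe]
  have hc : ((((S.filter (fun β => ¬ P β)).sort (· ≤ ·))
      ++ ((S.filter P).sort (· ≤ ·)) : List (Fin n)) : Multiset (Fin n))
      = (((S.filter (fun β => ¬ P β)).sort (· ≤ ·) : List (Fin n)) : Multiset (Fin n))
        + (((S.filter P).sort (· ≤ ·) : List (Fin n)) : Multiset (Fin n)) := rfl
  rw [hc, Finset.sort_eq, Finset.sort_eq, Finset.sort_eq, Finset.filter_val,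
    Finset.filter_val]
  rw [add_comm]
  exact (Multiset.filter_add_not _ _).symm

lemma margDep1 {ν : Meas X} (hν : Pos X ν) (α : Fin n) (S : Finset (Fin n)) :
    marg X (fun i => i.val ≤ α.val) (RG X S ν)
      = marg X (fun i => i.val ≤ α.val) (RG X (S.filter (fun β => β.val < α.val)) ν) := by
  have hperm := sort_filter_perm S (fun β => β.val < α.val)
  unfold RG
  rw [foldR_perm X hperm hν, List.foldr_append]
  exact marg_strip X (foldR_pos X hν _) α _
    (fun β hβ => Nat.le_of_not_lt (Finset.mem_filter.mp ((Finset.mem_sort _).mp hβ)).2)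

lemma margDep2 {ν : Meas X} (hν : Pos X ν) (α : Fin n) (S : Finset (Fin n)) :
    marg X (fun i => ¬ i.val ≤ α.val) (RG X S ν)
      = marg X (fun i => ¬ i.val ≤ α.val) (RG X (S.filter (fun β => α.val < β.val)) ν) := by
  have hperm := sort_filter_perm S (fun β => α.val < β.val)
  unfold RG
  rw [foldR_perm X hperm hν, List.foldr_append]
  exact marg_stripN X (foldR_pos X hν _) α _
    (fun β hβ => Nat.le_of_not_lt (Finset.mem_filter.mp ((Finset.mem_sort _).mp hβ)).2)

end Dep

section Coeff

/-- Relative single-crossover coefficients. -/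
noncomputable def cf (ρ : Fin n → ℝ) (t : ℝ) (s A : Finset (Fin n)) : ℝ :=
  (∏ β ∈ s \ A, Real.exp (-(ρ β * t))) * ∏ β ∈ A, (1 - Real.exp (-(ρ β * t)))

lemma coeffA_eq_cf (ρ : Fin n → ℝ) (t : ℝ) (G : Finset (Fin n)) :
    coeffA ρ G t = cf ρ t Finset.univ G := by
  unfold coeffA cf
  rw [Finset.compl_eq_univ_sdiff]

lemma coeffA_nonneg (ρ : Fin n → ℝ) {t : ℝ} (hρ : ∀ α, 0 < ρ α) (ht : 0 ≤ t)
    (G : Finset (Fin n)) : 0 ≤ coeffA ρ G t := by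
  unfold coeffA
  apply mul_nonneg
  · exact Finset.prod_nonneg fun β _ => (Real.exp_pos _).le
  · refine Finset.prod_nonneg fun β _ => ?_
    have : Real.exp (-(ρ β * t)) ≤ 1 := by
      rw [Real.exp_le_one_iff]
      have := mul_nonneg (hρ β).le ht
      linarith
    linarith

lemma sum_cf (ρ : Fin n → ℝ) (t : ℝ) (s : Finset (Fin n)) :
    ∑ A ∈ s.powerset, cf ρ t s A = 1 := by
  have h := Finset.prod_add (fun β => 1 - Real.exp (-(ρ β * t)))
    (fun β => Real.exp (-(ρ β * t))) s
  simp only [sub_add_cancel, Finset.prod_const_one] at h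
  rw [show (1 : ℝ) = ∑ A ∈ s.powerset,
      (∏ β ∈ A, (1 - Real.exp (-(ρ β * t)))) * ∏ β ∈ s \ A, Real.exp (-(ρ β * t)) from h]
  exact Finset.sum_congr rfl fun A _ => mul_comm _ _

lemma cf_union (ρ : Fin n → ℝ) (t : ℝ) (L₁ : Finset (Fin n)) {A B : Finset (Fin n)}
    (hA : A ⊆ L₁) (hB : B ⊆ L₁ᶜ) :
    cf ρ t Finset.univ (A ∪ B) = cf ρ t L₁ A * cf ρ t L₁ᶜ B := by
  have hdAB : Disjoint A B := (disjoint_compl_right).mono hA hB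
  have hd' : Disjoint (L₁ \ A) (L₁ᶜ \ B) :=
    (disjoint_compl_right).mono (Finset.sdiff_subset) (Finset.sdiff_subset)
  have h1 : Finset.univ \ (A ∪ B) = (L₁ \ A) ∪ (L₁ᶜ \ B) := by
    ext i
    simp only [Finset.mem_sdiff, Finset.mem_univ, true_and, Finset.mem_union,
      Finset.mem_compl]
    constructor
    · intro h
      by_cases hi : i ∈ L₁
      · exact Or.inl ⟨hi, fun ha => h (Or.inl ha)⟩
      · exact Or.inr ⟨hi, fun hb => h (Or.inr hb)⟩
    · rintro (⟨hi, ha⟩ | ⟨hi, hb⟩)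
      · rintro (h | h)
        · exact ha h
        · exact (Finset.mem_compl.mp (hB h)) hi
      · rintro (h | h)
        · exact hi (hA h)
        · exact hb h
  unfold cf
  rw [h1, Finset.prod_union hd', Finset.prod_union hdAB]
  ring

lemma sum_powerset_split (L₁ : Finset (Fin n)) (F : Finset (Fin n) → ℝ) :
    ∑ G ∈ (Finset.univ : Finset (Fin n)).powerset, F G
      = ∑ A ∈ L₁.powerset, ∑ B ∈ L₁ᶜ.powerset, F (A ∪ B) := by
  rw [← Finset.sum_product']
  refine Finset.sum_nbij' (fun G => (G ∩ L₁, G ∩ L₁ᶜ)) (fun P => P.1 ∪ P.2) ?_ ?_ ?_ ?_ ?_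
  · intro G _
    simp only [Finset.mem_product, Finset.mem_powerset]
    exact ⟨Finset.inter_subset_right, Finset.inter_subset_right⟩
  · intro P _
    exact Finset.mem_powerset.mpr (Finset.subset_univ _)
  · intro G _
    simp only
    rw [← Finset.inter_union_distrib_left, Finset.union_compl, Finset.inter_univ]
  · intro P hP
    simp only [Finset.mem_product, Finset.mem_powerset] at hP
    obtain ⟨h1, h2⟩ := hP
    have e1 : (P.1 ∪ P.2) ∩ L₁ = P.1 := by
      ext i
      have ha := @h1 i
      have hb := @h2 i
      simp only [Finset.mem_compl] at hb
      simp only [Finset.mem_inter, Finset.mem_union]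
      constructor
      · rintro ⟨h | h, hi⟩
        · exact h
        · exact absurd hi (hb h)
      · intro h
        exact ⟨Or.inl h, ha h⟩
    have e2 : (P.1 ∪ P.2) ∩ L₁ᶜ = P.2 := by
      ext i
      have ha := @h1 i
      have hb := @h2 i
      simp only [Finset.mem_compl] at hb
      simp only [Finset.mem_inter, Finset.mem_union, Finset.mem_compl]
      constructor
      · rintro ⟨h | h, hi⟩
        · exact absurd (ha h) hi
        · exact h
      · intro h
        exact ⟨Or.inr h, hb h⟩
    have : ((P.1 ∪ P.2) ∩ L₁, (P.1 ∪ P.2) ∩ L₁ᶜ) = P := by rw [e1, e2]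
    simpa using this
  · intro G _
    simp only
    rw [← Finset.inter_union_distrib_left, Finset.union_compl, Finset.inter_univ]

lemma collapse (ρ : Fin n → ℝ) (t : ℝ) (L₁ : Finset (Fin n)) (u v : Finset (Fin n) → ℝ)
    (hu : ∀ G, u G = u (G ∩ L₁)) (hv : ∀ G, v G = v (G ∩ L₁ᶜ)) :
    (∑ G ∈ (Finset.univ : Finset (Fin n)).powerset, cf ρ t Finset.univ G * u G)
      * (∑ G ∈ (Finset.univ : Finset (Fin n)).powerset, cf ρ t Finset.univ G * v G)
    = ∑ G ∈ (Finset.univ : Finset (Fin n)).powerset, cf ρ t Finset.univ G * (u G * v G) := by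
  have hint : ∀ {A B : Finset (Fin n)}, A ⊆ L₁ → B ⊆ L₁ᶜ →
      (A ∪ B) ∩ L₁ = A ∧ (A ∪ B) ∩ L₁ᶜ = B := by
    intro A B h1 h2
    constructor
    · ext i
      have ha := @h1 i
      have hb := @h2 i
      simp only [Finset.mem_compl] at hb
      simp only [Finset.mem_inter, Finset.mem_union]
      constructor
      · rintro ⟨h | h, hi⟩
        · exact h
        · exact absurd hi (hb h)
      · intro h
        exact ⟨Or.inl h, ha h⟩
    · ext i
      have ha := @h1 i
      have hb := @h2 i
      simp only [Finset.mem_compl] at hb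
      simp only [Finset.mem_inter, Finset.mem_union, Finset.mem_compl]
      constructor
      · rintro ⟨h | h, hi⟩
        · exact absurd (ha h) hi
        · exact h
      · intro h
        exact ⟨Or.inr h, hb h⟩
  have hterm : ∀ (w : Finset (Fin n) → ℝ) A B, A ∈ L₁.powerset → B ∈ L₁ᶜ.powerset →
      ∀ (hw : ∀ G, w G = w (G ∩ L₁)) , w (A ∪ B) = w A := by
    intro w A B hA hB hw
    rw [Finset.mem_powerset] at hA hB
    rw [hw (A ∪ B), (hint hA hB).1, hw A, Finset.inter_eq_left.mpr hA]
  have hterm' : ∀ (w : Finset (Fin n) → ℝ) A B, A ∈ L₁.powerset → B ∈ L₁ᶜ.powerset →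
      ∀ (hw : ∀ G, w G = w (G ∩ L₁ᶜ)) , w (A ∪ B) = w B := by
    intro w A B hA hB hw
    rw [Finset.mem_powerset] at hA hB
    rw [hw (A ∪ B), (hint hA hB).2, hw B, Finset.inter_eq_left.mpr hB]
  have e1 : (∑ G ∈ (Finset.univ : Finset (Fin n)).powerset, cf ρ t Finset.univ G * u G)
      = ∑ A ∈ L₁.powerset, cf ρ t L₁ A * u A := by
    rw [sum_powerset_split L₁]
    have : ∀ A ∈ L₁.powerset, ∑ B ∈ L₁ᶜ.powerset, cf ρ t Finset.univ (A ∪ B) * u (A ∪ B)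
        = cf ρ t L₁ A * u A := by
      intro A hA
      have : ∀ B ∈ L₁ᶜ.powerset, cf ρ t Finset.univ (A ∪ B) * u (A ∪ B)
          = (cf ρ t L₁ A * u A) * cf ρ t L₁ᶜ B := by
        intro B hB
        rw [cf_union ρ t L₁ (Finset.mem_powerset.mp hA) (Finset.mem_powerset.mp hB),
          hterm u A B hA hB hu]
        ring
      rw [Finset.sum_congr rfl this, ← Finset.mul_sum, sum_cf, mul_one]
    exact Finset.sum_congr rfl this
  have e2 : (∑ G ∈ (Finset.univ : Finset (Fin n)).powerset, cf ρ t Finset.univ G * v G)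
      = ∑ B ∈ L₁ᶜ.powerset, cf ρ t L₁ᶜ B * v B := by
    rw [sum_powerset_split L₁, Finset.sum_comm]
    have : ∀ B ∈ L₁ᶜ.powerset, ∑ A ∈ L₁.powerset, cf ρ t Finset.univ (A ∪ B) * v (A ∪ B)
        = cf ρ t L₁ᶜ B * v B := by
      intro B hB
      have : ∀ A ∈ L₁.powerset, cf ρ t Finset.univ (A ∪ B) * v (A ∪ B)
          = (cf ρ t L₁ᶜ B * v B) * cf ρ t L₁ A := by
        intro A hA
        rw [cf_union ρ t L₁ (Finset.mem_powerset.mp hA) (Finset.mem_powerset.mp hB),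
          hterm' v A B hA hB hv]
        ring
      rw [Finset.sum_congr rfl this, ← Finset.mul_sum, sum_cf, mul_one]
    exact Finset.sum_congr rfl this
  have e3 : (∑ G ∈ (Finset.univ : Finset (Fin n)).powerset,
        cf ρ t Finset.univ G * (u G * v G))
      = (∑ A ∈ L₁.powerset, cf ρ t L₁ A * u A)
        * ∑ B ∈ L₁ᶜ.powerset, cf ρ t L₁ᶜ B * v B := by
    rw [sum_powerset_split L₁, Finset.sum_mul_sum]
    refine Finset.sum_congr rfl fun A hA => Finset.sum_congr rfl fun B hB => ?_
    rw [cf_union ρ t L₁ (Finset.mem_powerset.mp hA) (Finset.mem_powerset.mp hB),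
      hterm u A B hA hB hu, hterm' v A B hA hB hv]
    ring
  rw [e1, e2, e3]

end Coeff

section Key

lemma key {ν : Meas X} (hν : Pos X ν) (h0 : ν ≠ 0) (ρ : Fin n → ℝ) (hρ : ∀ α, 0 < ρ α)
    {t : ℝ} (ht : 0 ≤ t) (K : Finset (Fin n)) (α : Fin n) :
    R X α (∑ G ∈ (Finset.univ : Finset (Fin n)).powerset, coeffA ρ G t • RG X (G ∪ K) ν)
      = ∑ G ∈ (Finset.univ : Finset (Fin n)).powerset,
          coeffA ρ G t • RG X (insert α (G ∪ K)) ν := by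
  have hm : 0 < mass X ν := mass_pos X hν h0
  have ha0 : ∀ G, 0 ≤ coeffA ρ G t := coeffA_nonneg ρ hρ ht
  have hsum1 : ∑ G ∈ (Finset.univ : Finset (Fin n)).powerset, coeffA ρ G t = 1 := by
    simp only [coeffA_eq_cf]
    exact sum_cf ρ t Finset.univ
  set ω := ∑ G ∈ (Finset.univ : Finset (Fin n)).powerset, coeffA ρ G t • RG X (G ∪ K) ν
    with hωdef
  have hωpos : Pos X ω := Pos_linear X (fun G _ => ha0 G) (fun G _ => RG_pos X hν _)
  have hωmass : mass X ω = mass X ν := by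
    rw [hωdef, mass_linear]
    have hc : ∀ G ∈ (Finset.univ : Finset (Fin n)).powerset,
        coeffA ρ G t * mass X (RG X (G ∪ K) ν) = coeffA ρ G t * mass X ν := by
      intro G _; rw [mass_RG X hν]
    rw [Finset.sum_congr rfl hc, ← Finset.sum_mul, hsum1, one_mul]
  have hω0 : ω ≠ 0 := ne_zero_of_mass X (by rw [hωmass]; exact ne_of_gt hm)
  have hRHS : ∀ G : Finset (Fin n), RG X (insert α (G ∪ K)) ν
      = (mass X ν)⁻¹ • prodM X (fun i => i.val ≤ α.val)
          (marg X (fun i => i.val ≤ α.val) (RG X (G ∪ K) ν))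
          (marg X (fun i => ¬ i.val ≤ α.val) (RG X (G ∪ K) ν)) := by
    intro G
    rw [← R_RG X hν α (G ∪ K), R_apply X (RG_ne_zero X hν h0 (G ∪ K)) α,
      tv_eq_mass X (RG_pos X hν _), mass_RG X hν]
  funext x
  rw [R_apply X hω0 α, tv_eq_mass X hωpos, hωmass, Pi.smul_apply, smul_eq_mul,
    prodM_apply']
  rw [hωdef, marg_linear, marg_linear]
  simp only [Finset.sum_apply, Pi.smul_apply, smul_eq_mul]
  have hRHSx : ∀ G : Finset (Fin n), RG X (insert α (G ∪ K)) ν x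
      = (mass X ν)⁻¹
        * (marg X (fun i => i.val ≤ α.val) (RG X (G ∪ K) ν)
            (restr X (fun i => i.val ≤ α.val) x)
          * marg X (fun i => ¬ i.val ≤ α.val) (RG X (G ∪ K) ν)
            (restr X (fun i => ¬ i.val ≤ α.val) x)) := by
    intro G
    rw [hRHS G, Pi.smul_apply, smul_eq_mul, prodM_apply']
  simp only [hRHSx]
  -- set up the collapse
  set L₁ : Finset (Fin n) := Finset.univ.filter (fun β => β.val < α.val) with hL₁def
  set u : Finset (Fin n) → ℝ := fun S =>
    marg X (fun i => i.val ≤ α.val) (RG X (S ∪ K) ν)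
      (restr X (fun i => i.val ≤ α.val) x) with hudef
  set v : Finset (Fin n) → ℝ := fun S =>
    marg X (fun i => ¬ i.val ≤ α.val) (RG X (S ∪ K) ν)
      (restr X (fun i => ¬ i.val ≤ α.val) x) with hvdef
  have hu : ∀ G, u G = u (G ∩ L₁) := by
    intro G
    have h1 := margDep1 X hν α (G ∪ K)
    have h2 := margDep1 X hν α ((G ∩ L₁) ∪ K)
    have hfil : (G ∪ K).filter (fun β => β.val < α.val)
        = ((G ∩ L₁) ∪ K).filter (fun β => β.val < α.val) := by
      ext β
      simp only [Finset.mem_filter, Finset.mem_union, Finset.mem_inter, hL₁def,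
        Finset.mem_univ, true_and]
      constructor
      · rintro ⟨hg | hk, hP⟩
        · exact ⟨Or.inl ⟨hg, hP⟩, hP⟩
        · exact ⟨Or.inr hk, hP⟩
      · rintro ⟨⟨hg, _⟩ | hk, hP⟩
        · exact ⟨Or.inl hg, hP⟩
        · exact ⟨Or.inr hk, hP⟩
    simp only [hudef]
    rw [h1, h2, hfil]
  have hv : ∀ G, v G = v (G ∩ L₁ᶜ) := by
    intro G
    have h1 := margDep2 X hν α (G ∪ K)
    have h2 := margDep2 X hν α ((G ∩ L₁ᶜ) ∪ K)
    have hfil : (G ∪ K).filter (fun β => α.val < β.val)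
        = ((G ∩ L₁ᶜ) ∪ K).filter (fun β => α.val < β.val) := by
      ext β
      simp only [Finset.mem_filter, Finset.mem_union, Finset.mem_inter, hL₁def,
        Finset.mem_compl, Finset.mem_univ, true_and]
      constructor
      · rintro ⟨hg | hk, hP⟩
        · exact ⟨Or.inl ⟨hg, by omega⟩, hP⟩
        · exact ⟨Or.inr hk, hP⟩
      · rintro ⟨⟨hg, _⟩ | hk, hP⟩
        · exact ⟨Or.inl hg, hP⟩
        · exact ⟨Or.inr hk, hP⟩
    simp only [hvdef]
    rw [h1, h2, hfil]
  have hcol := collapse ρ t L₁ u v hu hv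
  simp only [coeffA_eq_cf]
  calc (mass X ν)⁻¹
      * ((∑ G ∈ (Finset.univ : Finset (Fin n)).powerset, cf ρ t Finset.univ G * u G)
        * ∑ G ∈ (Finset.univ : Finset (Fin n)).powerset, cf ρ t Finset.univ G * v G)
      = (mass X ν)⁻¹
        * ∑ G ∈ (Finset.univ : Finset (Fin n)).powerset,
            cf ρ t Finset.univ G * (u G * v G) := by rw [hcol]
    _ = ∑ G ∈ (Finset.univ : Finset (Fin n)).powerset,
          cf ρ t Finset.univ G * ((mass X ν)⁻¹ * (u G * v G)) := by
        rw [Finset.mul_sum]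
        exact Finset.sum_congr rfl fun G _ => by ring

lemma fold_key {ν : Meas X} (hν : Pos X ν) (h0 : ν ≠ 0) (ρ : Fin n → ℝ)
    (hρ : ∀ α, 0 < ρ α) {t : ℝ} (ht : 0 ≤ t) (l : List (Fin n)) (K : Finset (Fin n)) :
    l.foldr (fun β μ => R X β μ)
        (∑ G ∈ (Finset.univ : Finset (Fin n)).powerset, coeffA ρ G t • RG X (G ∪ K) ν)
      = ∑ G ∈ (Finset.univ : Finset (Fin n)).powerset,
          coeffA ρ G t • RG X (G ∪ (K ∪ l.toFinset)) ν := by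
  induction l generalizing K with
  | nil => simp
  | cons a l ih =>
      rw [List.foldr_cons, ih K, key X hν h0 ρ hρ ht (K ∪ l.toFinset) a]
      refine Finset.sum_congr rfl fun G _ => ?_
      have : insert a (G ∪ (K ∪ l.toFinset)) = G ∪ (K ∪ (a :: l).toFinset) := by
        ext β
        simp only [Finset.mem_insert, Finset.mem_union, List.toFinset_cons,
          List.mem_toFinset]
        tauto
      rw [this]

end Key

/-- linear action on the solution simplex:
`R_H(∑_{G⊆L} a_G(t) R_G(ν)) = ∑_{G⊆L} a_G(t) R_{G∪H}(ν)` for every `H ⊆ L`. -/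
theorem RG_linear_action (ρ : Fin n → ℝ) (hρ : ∀ α, 0 < ρ α)
    (ν : Meas X) (hν : Pos X ν) {t : ℝ} (ht : 0 ≤ t) (H : Finset (Fin n)) :
    RG X H (∑ G ∈ (Finset.univ : Finset (Fin n)).powerset, coeffA ρ G t • RG X G ν) =
      ∑ G ∈ (Finset.univ : Finset (Fin n)).powerset, coeffA ρ G t • RG X (G ∪ H) ν := by
  by_cases h0 : ν = 0
  · subst h0
    simp only [RG_zero, smul_zero, Finset.sum_const_zero]
  · have hfk := fold_key X hν h0 ρ hρ ht (H.sort (· ≤ ·)) ∅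
    have hbase : ∀ G : Finset (Fin n), G ∪ (∅ : Finset (Fin n)) = G := fun G =>
      Finset.union_empty G
    simp only [hbase, Finset.empty_union, Finset.sort_toFinset] at hfk
    exact hfk

end Recombination
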